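/- Suppose 4 divides n and c ∈ ℚ is such that A_n(c) is a square in ℚ, where A_1(c) = c, A_{k+1}(c) = A_k(c)^2 + c. Assuming the known fact that A_4(c) is a square only for c = 0 and c = -1, conclude c = 0 or c = -1. -/

import Mathlib

section Helpers

variable {p : ℕ} [hp : Fact p.Prime]

private lemma int_add {x y : ℚ} (hx : 0 ≤ padicValRat p x) (hy : 0 ≤ padicValRat p y) :
    0 ≤ padicValRat p (x + y) := by
  by_cases h : x + y = 0
  · simp [h]
  · exact le_trans (le_min hx hy) (padicValRat.min_le_padicValRat_add h)

private lemma int_mul {x y : ℚ} (hx : 0 ≤ padicValRat p x) (hy : 0 ≤ padicValRat p y) :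
    0 ≤ padicValRat p (x * y) := by
  by_cases hx0 : x = 0
  · simp [hx0]
  by_cases hy0 : y = 0
  · simp [hy0]
  rw [padicValRat.mul hx0 hy0]
  exact add_nonneg hx hy

private lemma int_sq {x : ℚ} (hx : 0 ≤ padicValRat p x) : 0 ≤ padicValRat p (x ^ 2) := by
  rw [sq]; exact int_mul hx hx

private lemma val_sq (x : ℚ) (hx : x ≠ 0) : padicValRat p (x ^ 2) = 2 * padicValRat p x := by
  rw [sq, padicValRat.mul hx hx]; ring

private lemma val_add_of_lt {x y : ℚ} (hx : x ≠ 0) (h : padicValRat p x < padicValRat p y) :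
    x + y ≠ 0 ∧ padicValRat p (x + y) = padicValRat p x := by
  by_cases hy0 : y = 0
  · simp [hy0, hx]
  have hxy : x + y ≠ 0 := by
    intro h0
    have hyx : y = -x := by linarith [eq_neg_of_add_eq_zero_right h0]
    rw [hyx, padicValRat.neg] at h
    exact lt_irrefl _ h
  exact ⟨hxy, padicValRat.add_eq_of_lt hxy hx hy0 h⟩

end Helpers

private lemma v2_two : padicValRat 2 (2 : ℚ) = 1 := by
  simpa using padicValRat.self (p := 2) one_lt_two

private lemma v2_four : padicValRat 2 (4 : ℚ) = 2 := by
  have h4 : (4 : ℚ) = 2 ^ 2 := by norm_num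
  rw [h4, padicValRat.pow, v2_two]
  ring

private lemma num_den_odd {x : ℚ} (hx0 : x ≠ 0) (hx : padicValRat 2 x = 0) :
    Odd x.num ∧ Odd (x.den : ℤ) := by
  have hd : ¬ (2 ∣ x.den) := by
    intro h2d
    have hnd : ¬ ((2 : ℤ) ∣ x.num) := by
      intro h2n
      have hcop := x.reduced
      have h2 : (2 : ℕ) ∣ x.num.natAbs := Int.natAbs_dvd_natAbs.mpr (by exact_mod_cast h2n)
      have := Nat.Coprime.eq_one_of_dvd (hcop.coprime_dvd_left h2) h2d
      norm_num at this
    have hvn : padicValInt 2 x.num = 0 := padicValInt.eq_zero_of_not_dvd (by exact_mod_cast hnd)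
    have hvd : 0 < padicValNat 2 x.den :=
      @one_le_padicValNat_of_dvd 2 x.den ⟨Nat.prime_two⟩ x.den_nz h2d
    rw [padicValRat_def, hvn] at hx
    omega
  have hn : ¬ ((2 : ℤ) ∣ x.num) := by
    intro h2n
    have hvd : padicValNat 2 x.den = 0 := padicValNat.eq_zero_of_not_dvd hd
    have hvn : 0 < padicValInt 2 x.num := by
      unfold padicValInt
      exact @one_le_padicValNat_of_dvd 2 x.num.natAbs ⟨Nat.prime_two⟩
        (Int.natAbs_ne_zero.mpr (Rat.num_ne_zero.mpr hx0))
        (Int.natAbs_dvd_natAbs.mpr (by exact_mod_cast h2n))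
    rw [padicValRat_def, hvd] at hx
    omega
  constructor
  · exact Int.not_even_iff_odd.mp (fun he => hn (even_iff_two_dvd.mp he))
  · have hdz : ¬ ((2:ℤ) ∣ (x.den : ℤ)) := by exact_mod_cast hd
    exact Int.not_even_iff_odd.mp (fun he => hdz (even_iff_two_dvd.mp he))

private lemma odd_sq_int (a : ℤ) (ha : Odd a) : ∃ m : ℤ, a ^ 2 = 8 * m + 1 := by
  obtain ⟨k, rfl⟩ := ha
  obtain ⟨m, hm⟩ := Int.even_mul_succ_self k
  exact ⟨m, by linear_combination 4 * hm⟩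

private lemma int_intCast (z : ℤ) : 0 ≤ padicValRat 2 (z : ℚ) := by
  rw [padicValRat.of_int]
  exact_mod_cast Nat.zero_le _

private lemma v2_intCast_odd {z : ℤ} (hz : Odd z) : padicValRat 2 (z : ℚ) = 0 := by
  rw [padicValRat.of_int]
  unfold padicValInt
  rw [padicValNat.eq_zero_of_not_dvd]
  · rfl
  · intro h
    have h2 : Odd z.natAbs := Int.natAbs_odd.mpr hz
    rw [Nat.odd_iff] at h2
    omega

/-- x odd 2-adic unit implies x² = 1 + 8r with r 2-integral -/
private lemma sq_one_add_eight {x : ℚ} (hx0 : x ≠ 0) (hx : padicValRat 2 x = 0) :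
    ∃ r : ℚ, x ^ 2 = 1 + 8 * r ∧ 0 ≤ padicValRat 2 r := by
  obtain ⟨hno, hdo⟩ := num_den_odd hx0 hx
  obtain ⟨ma, hma⟩ := odd_sq_int x.num hno
  obtain ⟨mb, hmb⟩ := odd_sq_int (x.den : ℤ) hdo
  set d : ℚ := ((x.den : ℤ) : ℚ) with hdd
  have hd0 : d ≠ 0 := by
    rw [hdd]
    exact_mod_cast x.den_nz
  have hxd : x * d = (x.num : ℚ) := by
    rw [hdd]
    push_cast
    rw [mul_comm]
    exact Rat.den_mul_eq_num x
  refine ⟨((ma - mb : ℤ) : ℚ) / d ^ 2, ?_, ?_⟩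
  · have h1 : ((x.num : ℚ)) ^ 2 = 8 * (ma : ℚ) + 1 := by exact_mod_cast hma
    have h2 : d ^ 2 = 8 * (mb : ℚ) + 1 := by rw [hdd]; exact_mod_cast hmb
    have key : x ^ 2 * d ^ 2 = d ^ 2 + 8 * ((ma : ℚ) - (mb : ℚ)) := by
      have : (x * d) ^ 2 = 8 * (ma : ℚ) + 1 := by rw [hxd]; exact h1
      calc x ^ 2 * d ^ 2 = (x * d) ^ 2 := by ring
        _ = 8 * (ma : ℚ) + 1 := this
        _ = d ^ 2 + 8 * ((ma : ℚ) - (mb : ℚ)) := by rw [h2]; ring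
    field_simp
    push_cast
    linear_combination key
  · by_cases hmm : ((ma - mb : ℤ) : ℚ) = 0
    · simp [hmm]
    have hdo2 : padicValRat 2 d = 0 := by rw [hdd]; exact v2_intCast_odd hdo
    rw [padicValRat.div hmm (pow_ne_zero _ hd0), val_sq _ hd0, hdo2]
    simpa using int_intCast (ma - mb)

/-- 1 + 4h is a 2-adic unit -/
private lemma unit_one_add_four {h : ℚ} (hh : 0 ≤ padicValRat 2 h) :
    1 + 4 * h ≠ 0 ∧ padicValRat 2 (1 + 4 * h) = 0 := by
  by_cases h0 : h = 0
  · simp [h0]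
  have hv : padicValRat 2 (1:ℚ) < padicValRat 2 (4 * h) := by
    rw [padicValRat.mul (by norm_num) h0, v2_four]
    simp only [padicValRat.one]
    omega
  have hres := val_add_of_lt (p := 2) (one_ne_zero) hv
  exact ⟨hres.1, by rw [hres.2, padicValRat.one]⟩

private lemma unit_neg_one_add_four {h : ℚ} (hh : 0 ≤ padicValRat 2 h) :
    -1 + 4 * h ≠ 0 ∧ padicValRat 2 (-1 + 4 * h) = 0 := by
  by_cases h0 : h = 0
  · refine ⟨by norm_num [h0], ?_⟩
    rw [h0]
    rw [show (-1 : ℚ) + 4*0 = -(1:ℚ) by norm_num, padicValRat.neg, padicValRat.one]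
  have hv : padicValRat 2 (-1:ℚ) < padicValRat 2 (4 * h) := by
    rw [padicValRat.mul (by norm_num) h0, v2_four,
      show (-1 : ℚ) = -(1:ℚ) by norm_num, padicValRat.neg]
    simp only [padicValRat.one]
    omega
  have hres := val_add_of_lt (p := 2) (by norm_num : (-1:ℚ) ≠ 0) hv
  refine ⟨hres.1, ?_⟩
  rw [hres.2, show (-1 : ℚ) = -(1:ℚ) by norm_num, padicValRat.neg, padicValRat.one]

private lemma unit_one_add_two {t : ℚ} (ht : 0 ≤ padicValRat 2 t) :
    1 + 2 * t ≠ 0 ∧ padicValRat 2 (1 + 2 * t) = 0 := by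
  by_cases h0 : t = 0
  · simp [h0]
  have hv : padicValRat 2 (1:ℚ) < padicValRat 2 (2 * t) := by
    rw [padicValRat.mul (by norm_num) h0, v2_two]
    simp only [padicValRat.one]
    omega
  have hres := val_add_of_lt (p := 2) (one_ne_zero) hv
  exact ⟨hres.1, by rw [hres.2, padicValRat.one]⟩

/-- x odd 2-adic unit implies v₂(1+x²) = 1 -/
private lemma v2_one_add_sq {x : ℚ} (hx0 : x ≠ 0) (hx : padicValRat 2 x = 0) :
    padicValRat 2 (1 + x ^ 2) = 1 := by
  obtain ⟨r, hr, hri⟩ := sq_one_add_eight hx0 hx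
  have h2 : 1 + x ^ 2 = 2 * (1 + 4 * r) := by rw [hr]; ring
  obtain ⟨hu0, hu⟩ := unit_one_add_four hri
  rw [h2, padicValRat.mul (by norm_num) hu0, hu, v2_two]
  ring

/-- an odd rational is ±1 mod 4 -/
private lemma odd_split {c : ℚ} (hc0 : c ≠ 0) (hc : padicValRat 2 c = 0) :
    (∃ d : ℚ, c = 1 + 4 * d ∧ 0 ≤ padicValRat 2 d) ∨
    (∃ d : ℚ, c = -1 + 4 * d ∧ 0 ≤ padicValRat 2 d) := by
  obtain ⟨hno, hdo⟩ := num_den_odd hc0 hc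
  set a : ℤ := c.num
  set b : ℤ := (c.den : ℤ)
  have hbz : b ≠ 0 := by
    have := c.den_nz
    simp only [b]
    exact_mod_cast this
  have hb0 : (b : ℚ) ≠ 0 := Int.cast_ne_zero.mpr hbz
  have hcab : c * (b:ℚ) = (a : ℚ) := by
    push_cast
    rw [mul_comm]
    exact Rat.den_mul_eq_num c
  -- a - b is even
  have hab : Even (a - b) := Odd.sub_odd hno hdo
  obtain ⟨k, hk⟩ := hab
  rcases Int.even_or_odd k with hke | hko
  · -- 4 ∣ a - b : c = 1 + 4 * (k/2)/b
    obtain ⟨j, hj⟩ := hke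
    left
    refine ⟨(j : ℚ) / (b : ℚ), ?_, ?_⟩
    · have ha : (a : ℚ) = (b:ℚ) + 4 * (j:ℚ) := by
        have : a - b = 4 * j := by omega
        have := congrArg (fun z : ℤ => (z : ℚ)) this
        push_cast at this
        linarith
      field_simp
      linear_combination hcab + ha
    · by_cases hj0 : (j : ℚ) = 0
      · simp [hj0]
      rw [padicValRat.div hj0 hb0, v2_intCast_odd hdo]
      simpa using int_intCast j
  · -- k odd: a + b = 2a - 2k = 2(a - k), a - k even
    right
    have hak : Even (a - k) := Odd.sub_odd hno hko
    obtain ⟨j, hj⟩ := hak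
    refine ⟨(j : ℚ) / (b : ℚ), ?_, ?_⟩
    · have ha : (a : ℚ) = -(b:ℚ) + 4 * (j:ℚ) := by
        have : a + b = 4 * j := by omega
        have := congrArg (fun z : ℤ => (z : ℚ)) this
        push_cast at this
        linarith
      field_simp
      linear_combination hcab + ha
    · by_cases hj0 : (j : ℚ) = 0
      · simp [hj0]
      rw [padicValRat.div hj0 hb0, v2_intCast_odd hdo]
      simpa using int_intCast j

private lemma nat_square_of_even {n : ℕ} (h0 : n ≠ 0)
    (h : ∀ q : ℕ, q.Prime → Even (n.factorization q)) : IsSquare n := by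
  obtain ⟨a, b, hab, hsf⟩ := Nat.sq_mul_squarefree n
  have ha0 : a ≠ 0 := by
    intro h'
    rw [h'] at hab
    simp at hab
    exact h0 hab.symm
  have hb0 : b ≠ 0 := by
    intro h'
    rw [h'] at hab
    simp at hab
    exact h0 hab.symm
  have ha1 : a = 1 := by
    rw [Nat.eq_one_iff_not_exists_prime_dvd]
    intro q hq hqa
    have h1 : n.factorization q = 2 * b.factorization q + a.factorization q := by
      rw [← hab, Nat.factorization_mul (pow_ne_zero _ hb0) ha0, Nat.factorization_pow]
      simp
    have h2 : a.factorization q = 1 := (hsf.natFactorization_le_one q).antisymm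
      ((hq.dvd_iff_one_le_factorization ha0).mp hqa)
    have h3 := h q hq
    rw [h1, h2] at h3
    obtain ⟨m, hm⟩ := h3
    omega
  exact ⟨b, by rw [← hab, ha1]; ring⟩

private lemma rat_pm_square {r : ℚ} (h0 : r ≠ 0)
    (h : ∀ q : ℕ, q.Prime → Even (padicValRat q r)) :
    IsSquare r ∨ IsSquare (-r) := by
  have hnum : IsSquare r.num.natAbs := by
    apply nat_square_of_even (Int.natAbs_ne_zero.mpr (Rat.num_ne_zero.mpr h0))
    intro q hq
    rw [Nat.factorization_def _ hq]
    by_cases hd : q ∣ r.den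
    · have : ¬ q ∣ r.num.natAbs := by
        intro hn
        have := Nat.Coprime.eq_one_of_dvd (r.reduced.coprime_dvd_left hn) hd
        exact hq.ne_one this
      rw [padicValNat.eq_zero_of_not_dvd this]
      exact Even.zero
    · have hvd : padicValNat q r.den = 0 := padicValNat.eq_zero_of_not_dvd hd
      have := h q hq
      rw [padicValRat_def, hvd] at this
      have : Even (padicValInt q r.num) := by
        rcases this with ⟨m, hm⟩
        have hm' : (padicValInt q r.num : ℤ) = m + m := by push_cast at hm ⊢; omega
        rcases Int.even_or_odd m with he | ho
        · obtain ⟨j, hj⟩ := he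
          refine ⟨(padicValInt q r.num) / 2, by omega⟩
        · exact ⟨(padicValInt q r.num) / 2, by omega⟩
      exact this
  have hden : IsSquare r.den := by
    apply nat_square_of_even r.den_nz
    intro q hq
    rw [Nat.factorization_def _ hq]
    by_cases hd : q ∣ r.den
    · have hnn : ¬ q ∣ r.num.natAbs := by
        intro hn
        have := Nat.Coprime.eq_one_of_dvd (r.reduced.coprime_dvd_left hn) hd
        exact hq.ne_one this
      have hvn : padicValInt q r.num = 0 := by
        unfold padicValInt
        exact padicValNat.eq_zero_of_not_dvd hnn
      have := h q hq
      rw [padicValRat_def, hvn] at this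
      rcases this with ⟨m, hm⟩
      refine ⟨(padicValNat q r.den) / 2, ?_⟩
      omega
    · rw [padicValNat.eq_zero_of_not_dvd hd]
      exact Even.zero
  rcases Int.natAbs_eq r.num with hpos | hneg
  · left
    rw [Rat.isSquare_iff]
    constructor
    · rw [hpos]
      exact Int.isSquare_natCast_iff.mpr hnum
    · exact hden
  · right
    rw [Rat.isSquare_iff]
    constructor
    · rw [Rat.num_neg_eq_neg_num, hneg]
      simpa using Int.isSquare_natCast_iff.mpr hnum
    · rw [Rat.den_neg_eq_den]
      exact hden

private def orb (c : ℚ) : ℕ → ℚ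
  | 0 => 0
  | k+1 => (orb c k) ^ 2 + c

private lemma orb_succ (c : ℚ) (k : ℕ) : orb c (k+1) = (orb c k) ^ 2 + c := rfl

private lemma orb_one (c : ℚ) : orb c 1 = c := by simp [orb]

private lemma orb_four (c : ℚ) : orb c 4 = ((c^2+c)^2+c)^2+c := by
  simp [orb]

private lemma orb_int {p : ℕ} [hp : Fact p.Prime] {c : ℚ} (hc : 0 ≤ padicValRat p c) :
    ∀ k, 0 ≤ padicValRat p (orb c k) := by
  intro k
  induction k with
  | zero => simp [orb]
  | succ k ih => rw [orb_succ]; exact int_add (int_sq ih) hc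

/-- telescoping: orb c (k+4) - orb c 4 -/
private lemma orb_sub_four (c : ℚ) (k : ℕ) :
    orb c (k+4) - orb c 4 = (orb c k)^2 * ((orb c (k+1) + orb c 1)
      * (orb c (k+2) + orb c 2) * (orb c (k+3) + orb c 3)) := by
  have e1 : orb c (k+1) = orb c k ^ 2 + c := orb_succ c k
  have e2 : orb c (k+2) = orb c (k+1) ^ 2 + c := orb_succ c (k+1)
  have e3 : orb c (k+3) = orb c (k+2) ^ 2 + c := orb_succ c (k+2)
  have e4 : orb c (k+4) = orb c (k+3) ^ 2 + c := orb_succ c (k+3)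
  have f1 : orb c 1 = orb c 0 ^ 2 + c := orb_succ c 0
  have f2 : orb c 2 = orb c 1 ^ 2 + c := orb_succ c 1
  have f3 : orb c 3 = orb c 2 ^ 2 + c := orb_succ c 2
  have f4 : orb c 4 = orb c 3 ^ 2 + c := orb_succ c 3
  have f0 : orb c 0 = 0 := rfl
  rw [e4, f4, e3, f3, e2, f2, e1, f1, f0]
  ring

/-- key decomposition: orb c (4m) = orb c 4 * (1 + orb c 4 * w) with w integral -/
private lemma orb_dec (c : ℚ) : ∀ m : ℕ, ∃ w : ℚ,
    orb c (4*(m+1)) = orb c 4 * (1 + orb c 4 * w) ∧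
    ∀ p : ℕ, p.Prime → 0 ≤ padicValRat p c → 0 ≤ padicValRat p w := by
  intro m
  induction m with
  | zero =>
    exact ⟨0, by norm_num, fun p hp hc => by simp⟩
  | succ m ih =>
    obtain ⟨w, hw, hwint⟩ := ih
    set k : ℕ := 4*(m+1) with hk
    set Q : ℚ := orb c 4 with hQ
    set u : ℚ := 1 + Q * w with hu
    set G : ℚ := (orb c (k+1) + orb c 1) * (orb c (k+2) + orb c 2) * (orb c (k+3) + orb c 3)
      with hG
    refine ⟨u^2 * G, ?_, ?_⟩
    · have hidx : 4*(m+1+1) = k + 4 := by rw [hk]; ring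
      have hsub := orb_sub_four c k
      rw [← hG, hw] at hsub
      rw [hidx]
      have heq : orb c (k+4) = Q + (Q*u)^2 * G := by linarith [hsub]
      rw [heq]
      ring
    · intro p hp hc
      haveI : Fact p.Prime := ⟨hp⟩
      have hQi : 0 ≤ padicValRat p Q := orb_int hc 4
      have hui : 0 ≤ padicValRat p u :=
        int_add (by simp : (0:ℤ) ≤ padicValRat p (1:ℚ)) (int_mul hQi (hwint p hp hc))
      have hGi : 0 ≤ padicValRat p G := by
        rw [hG]
        exact int_mul (int_mul (int_add (orb_int hc _) (orb_int hc _))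
          (int_add (orb_int hc _) (orb_int hc _))) (int_add (orb_int hc _) (orb_int hc _))
      exact int_mul (int_sq hui) hGi

/-- negative valuation case -/
private lemma orb_neg_val {p : ℕ} [hp : Fact p.Prime] {c : ℚ} (hv : padicValRat p c < 0) :
    ∀ k, orb c (k+1) ≠ 0 ∧ padicValRat p (orb c (k+1)) = 2^k * padicValRat p c := by
  have hc0 : c ≠ 0 := by
    intro h
    rw [h] at hv
    simp at hv
  intro k
  induction k with
  | zero => rw [orb_one]; exact ⟨hc0, by ring⟩
  | succ k ih =>
    obtain ⟨hne, hval⟩ := ih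
    have hsq0 : (orb c (k+1))^2 ≠ 0 := pow_ne_zero _ hne
    have hvs : padicValRat p ((orb c (k+1))^2) = 2^(k+1) * padicValRat p c := by
      rw [val_sq _ hne, hval]; ring
    have hlt : padicValRat p ((orb c (k+1))^2) < padicValRat p c := by
      rw [hvs, pow_succ]
      have h1 : (0:ℤ) < 2 ^ k := pow_pos (by norm_num) k
      have h1' : (1:ℤ) ≤ 2 ^ k := h1
      nlinarith [mul_pos h1 (neg_pos.mpr hv)]
    obtain ⟨h1, h2⟩ := val_add_of_lt hsq0 hlt
    rw [orb_succ]
    exact ⟨h1, by rw [h2, hvs]⟩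

/-- positive 2-adic valuation case -/
private lemma orb_pos_val {c : ℚ} (hc0 : c ≠ 0) (hv : 1 ≤ padicValRat 2 c) :
    ∀ k, ∃ t : ℚ, orb c (k+1) = c * (1 + 2*t) ∧ 0 ≤ padicValRat 2 t := by
  intro k
  induction k with
  | zero => exact ⟨0, by rw [orb_one]; ring, by simp⟩
  | succ k ih =>
    obtain ⟨t, ht, hti⟩ := ih
    refine ⟨(c/2) * (1+2*t)^2, ?_, ?_⟩
    · rw [orb_succ, ht]
      ring
    · apply int_mul _ (int_sq (int_add (by simp) (int_mul (by rw [v2_two]; norm_num) hti)))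
      rw [padicValRat.div hc0 (by norm_num), v2_two]
      omega

/-- c ≡ 1 (mod 4): even-index orbit values have v₂ = 1 -/
private lemma orb_odd1 {c : ℚ} (hc0 : c ≠ 0) (hv : padicValRat 2 c = 0)
    {d : ℚ} (hd : c = 1 + 4 * d) (hdi : 0 ≤ padicValRat 2 d) :
    ∀ k, (∃ h : ℚ, orb c (2*k+1) = 1 + 4 * h ∧ 0 ≤ padicValRat 2 h) ∧
      (orb c (2*k+2) ≠ 0 ∧ padicValRat 2 (orb c (2*k+2)) = 1) := by
  have step_even : ∀ j h, orb c j = 1 + 4 * h → 0 ≤ padicValRat 2 h →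
      orb c (j+1) ≠ 0 ∧ padicValRat 2 (orb c (j+1)) = 1 := by
    intro j h hj hhi
    obtain ⟨hu0, hu⟩ := unit_one_add_four hhi
    obtain ⟨r, hr, hri⟩ := sq_one_add_eight (x := orb c j) (hj ▸ hu0) (hj ▸ hu)
    have he : orb c (j+1) = 2 * (1 + 2 * (2*r + d)) := by
      rw [orb_succ, hr, hd]; ring
    have hint : 0 ≤ padicValRat 2 (2*r + d) :=
      int_add (int_mul (by rw [v2_two]; norm_num) hri) hdi
    obtain ⟨hv0, hvu⟩ := unit_one_add_two hint
    constructor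
    · rw [he]; positivity
    · rw [he, padicValRat.mul (by norm_num) hv0, hvu, v2_two]; ring
  have step_odd : ∀ j, orb c j ≠ 0 → padicValRat 2 (orb c j) = 1 →
      ∃ h : ℚ, orb c (j+1) = 1 + 4 * h ∧ 0 ≤ padicValRat 2 h := by
    intro j hj0 hj
    refine ⟨(orb c j)^2 / 4 + d, ?_, ?_⟩
    · rw [orb_succ, hd]; ring
    · apply int_add _ hdi
      rw [padicValRat.div (pow_ne_zero _ hj0) (by norm_num), val_sq _ hj0, hj, v2_four]
      norm_num
  intro k
  induction k with
  | zero =>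
    have h1 : ∃ h : ℚ, orb c 1 = 1 + 4 * h ∧ 0 ≤ padicValRat 2 h :=
      ⟨d, by rw [orb_one, hd], hdi⟩
    obtain ⟨h, hh, hhi⟩ := h1
    exact ⟨⟨h, hh, hhi⟩, step_even 1 h hh hhi⟩
  | succ k ih =>
    obtain ⟨_, he0, he1⟩ := ih
    have hodd : ∃ h : ℚ, orb c (2*(k+1)+1) = 1 + 4 * h ∧ 0 ≤ padicValRat 2 h := by
      have := step_odd (2*k+2) he0 he1
      have hidx : 2*k+2+1 = 2*(k+1)+1 := by ring
      rwa [hidx] at this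
    obtain ⟨h, hh, hhi⟩ := hodd
    refine ⟨⟨h, hh, hhi⟩, ?_⟩
    have := step_even (2*(k+1)+1) h hh hhi
    have hidx : 2*(k+1)+1+1 = 2*(k+1)+2 := by ring
    rwa [hidx] at this

/-- c ≡ -1 (mod 4): 4 divides orb c 4 -/
private lemma orb_odd3 {c : ℚ} (hc0 : c ≠ 0) (hv : padicValRat 2 c = 0)
    {e : ℚ} (he : c = -1 + 4 * e) (hei : 0 ≤ padicValRat 2 e) :
    ∃ g : ℚ, orb c 4 = 4 * g ∧ 0 ≤ padicValRat 2 g := by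
  obtain ⟨r, hr, hri⟩ := sq_one_add_eight hc0 hv
  have h2 : orb c 2 = 4 * (2*r + e) := by
    rw [show (2:ℕ) = 1+1 from rfl, orb_succ, orb_one, hr, he]; ring
  have h3 : orb c 3 = -1 + 4 * (e + 4 * (2*r+e)^2) := by
    rw [show (3:ℕ) = 2+1 from rfl, orb_succ, h2, he]; ring
  have h3i : 0 ≤ padicValRat 2 (e + 4*(2*r+e)^2) := by
    apply int_add hei
    apply int_mul (by rw [v2_four]; norm_num)
    exact int_sq (int_add (int_mul (by rw [v2_two]; norm_num) hri) hei)
  obtain ⟨h30, h3u⟩ := unit_neg_one_add_four h3i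
  obtain ⟨r3, hr3, hr3i⟩ := sq_one_add_eight (x := orb c 3) (h3 ▸ h30) (h3 ▸ h3u)
  refine ⟨2*r3 + e, ?_, int_add (int_mul (by rw [v2_two]; norm_num) hr3i) hei⟩
  rw [show (4:ℕ) = 3+1 from rfl, orb_succ, hr3, he]; ring

/-- common elimination of A₄ = -s² in the 2-integral case -/
private lemma minus_elim {a4 w an y : ℚ} (h40 : a4 ≠ 0)
    (hv4 : 2 ≤ padicValRat 2 a4) (hw : 0 ≤ padicValRat 2 w)
    (hdec : an = a4 * (1 + a4 * w)) (hy : an = y * y) (han : an ≠ 0)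
    (s : ℚ) (hs : a4 = -(s * s)) : False := by
  have hs0 : s ≠ 0 := by
    intro h
    rw [h] at hs
    simp at hs
    exact h40 hs
  -- 1 + t² = s² * w with t = y/s
  set t : ℚ := y / s with ht
  have hkey : 1 + t^2 = s^2 * w := by
    have hy0 : y * y = a4 * (1 + a4 * w) := by rw [← hy, hdec]
    rw [ht]
    field_simp
    linear_combination hy0 + (1 + w*(a4 - s^2)) * hs
  have hpos : 1 + t^2 ≠ 0 := by positivity
  have hw0 : w ≠ 0 := by
    intro h
    rw [h] at hkey
    simp at hkey
    exact hpos (by linarith)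
  have hsw : 2 ≤ padicValRat 2 (s^2 * w) := by
    have hss : padicValRat 2 (s^2) = padicValRat 2 a4 := by
      rw [hs, padicValRat.neg, sq]
    rw [padicValRat.mul (pow_ne_zero _ hs0) hw0, hss]
    omega
  -- t is a 2-adic unit
  have ht2 : t^2 = s^2 * w - 1 := by linarith [hkey]
  have htne : t ≠ 0 := by
    intro h
    rw [h] at hkey
    norm_num at hkey
    rw [← hkey] at hsw
    simp at hsw
  have htu : padicValRat 2 t = 0 := by
    have hlt : padicValRat 2 (-1 : ℚ) < padicValRat 2 (s^2 * w) := by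
      rw [show (-1:ℚ) = -(1:ℚ) by norm_num, padicValRat.neg, padicValRat.one]
      omega
    have := val_add_of_lt (p := 2) (by norm_num : (-1:ℚ) ≠ 0) hlt
    have hval : padicValRat 2 (t^2) = 0 := by
      rw [ht2, show s^2*w - 1 = -1 + s^2*w by ring, this.2,
        show (-1:ℚ) = -(1:ℚ) by norm_num, padicValRat.neg, padicValRat.one]
    rw [val_sq _ htne] at hval
    omega
  have := v2_one_add_sq htne htu
  rw [hkey] at this
  omega

theorem stmt_7 (A : ℕ → ℚ → ℚ)
    (hA1 : ∀ c, A 1 c = c)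
    (hArec : ∀ n ≥ 1, ∀ c, A (n + 1) c = (A n c) ^ 2 + c)
    (hA4 : ∀ c : ℚ, IsSquare (A 4 c) → c = 0 ∨ c = -1)
    (n : ℕ) (hn : n ≠ 0) (h4n : 4 ∣ n)
    (c : ℚ) (hsq : IsSquare (A n c)) :
    c = 0 ∨ c = -1 := by
  by_cases hc0 : c = 0
  · exact Or.inl hc0
  by_cases hcm1 : c = -1
  · exact Or.inr hcm1
  exfalso
  have horb : ∀ k, A (k+1) c = orb c (k+1) := by
    intro k
    induction k with
    | zero => rw [hA1 c, orb_one]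
    | succ k ih =>
      rw [hArec (k+1) (by omega) c, ih]
      exact (orb_succ c (k+1)).symm
  obtain ⟨m, rfl⟩ := h4n
  obtain ⟨m', rfl⟩ : ∃ m', m = m'+1 := ⟨m-1, by omega⟩
  have hA4orb : A 4 c = orb c 4 := horb 3
  have hsq' : IsSquare (orb c (4*(m'+1))) := by
    have h1 := horb (4*m'+3)
    rw [show 4*m'+3+1 = 4*(m'+1) by ring] at h1
    rwa [h1] at hsq
  by_cases h40 : orb c 4 = 0
  · rcases hA4 c (by rw [hA4orb, h40]; exact IsSquare.zero) with h | h
    · exact hc0 h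
    · exact hcm1 h
  obtain ⟨w, hdec, hwint⟩ := orb_dec c m'
  obtain ⟨y, hy⟩ := hsq'
  obtain ⟨han, hminus⟩ : (orb c (4*(m'+1)) ≠ 0) ∧
      (∀ s : ℚ, orb c 4 = -(s*s) → False) := by
    rcases lt_or_ge (padicValRat 2 c) 0 with hneg | hnn
    · -- denominators: v₂ c < 0
      have han : orb c (4*(m'+1)) ≠ 0 := by
        have h1 := (orb_neg_val (p := 2) hneg (4*m'+3)).1
        rwa [show 4*m'+3+1 = 4*(m'+1) by ring] at h1
      refine ⟨han, ?_⟩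
      intro s hs
      have h30 : orb c 3 ≠ 0 := (orb_neg_val (p := 2) hneg 2).1
      have h3v : padicValRat 2 (orb c 3) = 4 * padicValRat 2 c := by
        have := (orb_neg_val (p := 2) hneg 2).2
        norm_num at this
        exact this
      have h4v : padicValRat 2 (orb c 4) = 8 * padicValRat 2 c := by
        have := (orb_neg_val (p := 2) hneg 3).2
        norm_num at this
        exact this
      have hs0 : s ≠ 0 := fun h => h40 (by rw [hs, h]; ring)
      have hsv : 2 * padicValRat 2 s = 8 * padicValRat 2 c := by
        have hss : s * s = -(orb c 4) := by rw [hs]; ring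
        have := congrArg (padicValRat 2) hss
        rw [padicValRat.mul hs0 hs0, padicValRat.neg, h4v] at this
        omega
      set t' : ℚ := s / orb c 3 with ht'
      have ht'0 : t' ≠ 0 := div_ne_zero hs0 h30
      have ht'v : padicValRat 2 t' = 0 := by
        rw [ht', padicValRat.div hs0 h30]
        omega
      have ho4 : orb c 4 = orb c 3 ^ 2 + c := orb_succ c 3
      have hiden : 1 + t'^2 = -(c / (orb c 3)^2) := by
        rw [ht']
        field_simp
        linear_combination hs - ho4
      have hv7 : padicValRat 2 (1 + t'^2) = -7 * padicValRat 2 c := by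
        rw [hiden, padicValRat.neg, padicValRat.div hc0 (pow_ne_zero _ h30),
          val_sq _ h30, h3v]
        ring
      have h1v := v2_one_add_sq ht'0 ht'v
      rw [hv7] at h1v
      omega
    · -- v₂ c ≥ 0
      rcases eq_or_lt_of_le hnn with heq | hpos1
      · -- v₂ c = 0, c odd
        rcases odd_split hc0 heq.symm with ⟨d, hd, hdi⟩ | ⟨e, he, hei⟩
        · -- c ≡ 1 mod 4 : contradiction outright
          exfalso
          have h1 := (orb_odd1 hc0 heq.symm hd hdi (2*m'+1)).2
          rw [show 2*(2*m'+1)+2 = 4*(m'+1) by ring] at h1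
          obtain ⟨hne, hv1⟩ := h1
          have hyne : y ≠ 0 := fun h => hne (by rw [hy, h]; ring)
          have h2v : padicValRat 2 (orb c (4*(m'+1))) = 2 * padicValRat 2 y := by
            rw [hy, padicValRat.mul hyne hyne]
            ring
          omega
        · -- c ≡ -1 mod 4
          obtain ⟨g, hg, hgi⟩ := orb_odd3 hc0 heq.symm he hei
          have hg0 : g ≠ 0 := fun h => h40 (by rw [hg, h]; ring)
          have hv4 : 2 ≤ padicValRat 2 (orb c 4) := by
            rw [hg, padicValRat.mul (by norm_num : (4:ℚ) ≠ 0) hg0, v2_four]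
            omega
          have han : orb c (4*(m'+1)) ≠ 0 := by
            intro h0
            rw [h0] at hdec
            have hu0 : 1 + orb c 4 * w = 0 :=
              (mul_eq_zero.mp hdec.symm).resolve_left h40
            have hw0 : w ≠ 0 := by
              intro h
              rw [h] at hu0
              norm_num at hu0
            have haw : orb c 4 * w = -1 := by linarith
            have := congrArg (padicValRat 2) haw
            rw [padicValRat.mul h40 hw0,
              show (-1:ℚ) = -(1:ℚ) by norm_num, padicValRat.neg, padicValRat.one] at this
            have hwi := hwint 2 Nat.prime_two (by omega)
            omega
          exact ⟨han, fun s hs => minus_elim h40 hv4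
            (hwint 2 Nat.prime_two (by omega)) hdec hy han s hs⟩
      · -- v₂ c ≥ 1
        have hall := orb_pos_val hc0 (by omega)
        obtain ⟨tN, htN, htNi⟩ := hall (4*m'+3)
        rw [show 4*m'+3+1 = 4*(m'+1) by ring] at htN
        obtain ⟨hu0, huv⟩ := unit_one_add_two htNi
        have han : orb c (4*(m'+1)) ≠ 0 := by
          rw [htN]
          exact mul_ne_zero hc0 hu0
        have hyne : y ≠ 0 := fun h => han (by rw [hy, h]; ring)
        have hvN : padicValRat 2 (orb c (4*(m'+1))) = padicValRat 2 c := by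
          rw [htN, padicValRat.mul hc0 hu0, huv]
          ring
        have hveven : padicValRat 2 (orb c (4*(m'+1))) = 2 * padicValRat 2 y := by
          rw [hy, padicValRat.mul hyne hyne]
          ring
        have hceven : 2 ≤ padicValRat 2 c := by omega
        obtain ⟨t4, ht4, ht4i⟩ := hall 3
        obtain ⟨hu40, hu4v⟩ := unit_one_add_two ht4i
        have hv4 : 2 ≤ padicValRat 2 (orb c 4) := by
          have hidx : orb c 4 = c * (1 + 2*t4) := ht4
          rw [hidx, padicValRat.mul hc0 hu40, hu4v]
          omega
        exact ⟨han, fun s hs => minus_elim h40 hv4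
          (hwint 2 Nat.prime_two (by omega)) hdec hy han s hs⟩
  -- all valuations of orb c 4 are even
  have hyne : y ≠ 0 := fun h => han (by rw [hy, h]; ring)
  have heven : ∀ p : ℕ, p.Prime → Even (padicValRat p (orb c 4)) := by
    intro p hp
    haveI : Fact p.Prime := ⟨hp⟩
    rcases lt_or_ge (padicValRat p c) 0 with hnegp | hposp
    · have h4v : padicValRat p (orb c 4) = 8 * padicValRat p c := by
        have := (orb_neg_val (p := p) hnegp 3).2
        norm_num at this
        exact this
      exact ⟨4 * padicValRat p c, by rw [h4v]; ring⟩
    · have hwp := hwint p hp hposp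
      have h4i : 0 ≤ padicValRat p (orb c 4) := orb_int hposp 4
      have hvy : padicValRat p (orb c (4*(m'+1))) = 2 * padicValRat p y := by
        rw [hy, padicValRat.mul hyne hyne]
        ring
      by_cases hw0 : w = 0
      · have hiden : orb c (4*(m'+1)) = orb c 4 := by rw [hdec, hw0]; ring
        rw [hiden] at hvy
        exact ⟨padicValRat p y, by omega⟩
      · by_cases hv40 : padicValRat p (orb c 4) = 0
        · exact ⟨0, by omega⟩
        · have hgt : (0:ℤ) < padicValRat p (orb c 4) := lt_of_le_of_ne h4i (Ne.symm hv40)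
          have hlt : padicValRat p (1:ℚ) < padicValRat p (orb c 4 * w) := by
            rw [padicValRat.one, padicValRat.mul h40 hw0]
            omega
          obtain ⟨hune, huv⟩ := val_add_of_lt one_ne_zero hlt
          have hvan : padicValRat p (orb c (4*(m'+1))) = padicValRat p (orb c 4) := by
            rw [hdec, padicValRat.mul h40 hune, huv, padicValRat.one]
            ring
          exact ⟨padicValRat p y, by omega⟩
  rcases rat_pm_square h40 heven with hplus | hminus2
  · rcases hA4 c (by rw [hA4orb]; exact hplus) with h | h
    · exact hc0 h
    · exact hcm1 h
  · obtain ⟨s, hs⟩ := hminus2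
    exact hminus s (by linarith)
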